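/- Let G be a finite simple graph with vertex set V, let c > 0, and let S_1, …, S_k ⊆ V be pairwise disjoint vertex sets. For 0 ≤ j ≤ k set W_j := V ∖ (S_1 ∪ … ∪ S_j), and suppose |E(S_j, W_j)| ≤ c·Vol(S_j) for each 1 ≤ j ≤ k. Let U := S_1 ∪ … ∪ S_k. Then |∂U| ≤ c·Vol(U). Moreover, if in addition Vol(U) ≤ (47/48)·Vol(V), then |∂U| ≤ 47c·min(Vol(U), Vol(V∖U)); in particular, if U is a nonempty proper subset of V then Φ(U) ≤ 47c. -/

import Mathlib

open Finset

/-- The volume of a vertex set: the sum of the degrees (in `G`) of its vertices. -/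
def gvol {V : Type*} [Fintype V] (G : SimpleGraph V) [DecidableRel G.Adj]
    (S : Finset V) : ℕ :=
  ∑ v ∈ S, G.degree v

/-- The number of edges of `G` with one endpoint in `S` and the other in `T`
(for disjoint `S`, `T`, counted as ordered pairs `(s, t) ∈ S × T` with `s ~ t`). -/
def gcut {V : Type*} [Fintype V] [DecidableEq V] (G : SimpleGraph V) [DecidableRel G.Adj]
    (S T : Finset V) : ℕ :=
  ((S ×ˢ T).filter fun p => G.Adj p.1 p.2).card

lemma gcut_eq_sum {V : Type*} [Fintype V] [DecidableEq V] (G : SimpleGraph V)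
    [DecidableRel G.Adj] (S T : Finset V) :
    gcut G S T = ∑ s ∈ S, ∑ t ∈ T, if G.Adj s t then 1 else 0 := by
  rw [gcut, Finset.card_filter, Finset.sum_product]

lemma gcut_mono_right {V : Type*} [Fintype V] [DecidableEq V] (G : SimpleGraph V)
    [DecidableRel G.Adj] (S : Finset V) {T T' : Finset V} (h : T ⊆ T') :
    gcut G S T ≤ gcut G S T' := by
  rw [gcut_eq_sum, gcut_eq_sum]
  exact Finset.sum_le_sum fun s _ => Finset.sum_le_sum_of_subset h

/-- Let `c > 0` and `S₁, …, S_k ⊆ V` pairwise disjoint. For `0 ≤ j ≤ k` set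
`W_j := V ∖ (S₁ ∪ ⋯ ∪ S_j)` and suppose `|E(S_j, W_j)| ≤ c·Vol(S_j)` for each `1 ≤ j ≤ k`.
Let `U := S₁ ∪ ⋯ ∪ S_k`. Then `|∂U| ≤ c·Vol(U)`. Moreover, if in addition
`Vol(U) ≤ (47/48)·Vol(V)`, then `|∂U| ≤ 47c·min(Vol U, Vol(V∖U))`; in particular, if `U` is a
nonempty proper subset of `V` then `Φ(U) ≤ 47c`. -/
theorem union_of_successive_sparse_cuts_is_sparse
    {V : Type*} [Fintype V] [DecidableEq V] (G : SimpleGraph V) [DecidableRel G.Adj]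
    (c : ℝ) (hc : 0 < c) (k : ℕ) (S : Fin k → Finset V)
    (hdisj : ∀ i j, i ≠ j → Disjoint (S i) (S j))
    (W : Fin k → Finset V)
    (hW : ∀ j, W j = Finset.univ \ ((Finset.univ.filter fun i => i ≤ j).biUnion S))
    (hsparse : ∀ j, (gcut G (S j) (W j) : ℝ) ≤ c * gvol G (S j))
    (U : Finset V) (hU : U = Finset.univ.biUnion S) :
    (gcut G U Uᶜ : ℝ) ≤ c * gvol G U ∧
    ((gvol G U : ℝ) ≤ (47 / 48) * gvol G Finset.univ →
      (gcut G U Uᶜ : ℝ) ≤ 47 * c * min (gvol G U : ℝ) (gvol G Uᶜ : ℝ) ∧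
      (U.Nonempty → U ≠ Finset.univ →
        (gcut G U Uᶜ : ℝ) / min (gvol G U : ℝ) (gvol G Uᶜ : ℝ) ≤ 47 * c)) := by
  -- Uᶜ ⊆ W j
  have hsub : ∀ j, Uᶜ ⊆ W j := by
    intro j
    rw [hW, hU]
    intro x hx
    simp only [Finset.mem_sdiff, Finset.mem_univ, true_and]
    intro hmem
    rw [Finset.mem_compl] at hx
    obtain ⟨i, hi, hxi⟩ := Finset.mem_biUnion.1 hmem
    exact hx (Finset.mem_biUnion.2 ⟨i, Finset.mem_univ i, hxi⟩)
  -- split gcut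
  have hsplit : gcut G U Uᶜ = ∑ j, gcut G (S j) Uᶜ := by
    rw [gcut_eq_sum, hU, Finset.sum_biUnion]
    · simp only [gcut_eq_sum]
    · intro i _ j _ hij
      exact hdisj i j hij
  have hvol : gvol G U = ∑ j, gvol G (S j) := by
    rw [gvol, hU, Finset.sum_biUnion]
    · simp only [gvol]
    · intro i _ j _ hij
      exact hdisj i j hij
  have h1 : (gcut G U Uᶜ : ℝ) ≤ c * gvol G U := by
    rw [hsplit, hvol]
    push_cast
    rw [Finset.mul_sum]
    refine Finset.sum_le_sum fun j _ => ?_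
    calc (gcut G (S j) Uᶜ : ℝ) ≤ (gcut G (S j) (W j) : ℝ) := by
          exact_mod_cast gcut_mono_right G (S j) (hsub j)
      _ ≤ c * gvol G (S j) := hsparse j
  refine ⟨h1, fun hbal => ?_⟩
  have htot : (gvol G (Finset.univ : Finset V) : ℝ) = gvol G U + gvol G Uᶜ := by
    rw [gvol, gvol, gvol, ← Nat.cast_add, ← Finset.sum_add_sum_compl U (fun v => G.degree v)]
  have ha : (0:ℝ) ≤ gvol G U := Nat.cast_nonneg _
  have hb : (0:ℝ) ≤ gvol G Uᶜ := Nat.cast_nonneg _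
  have hkey : (gvol G U : ℝ) ≤ 47 * gvol G Uᶜ := by
    rw [htot] at hbal; linarith
  have h2 : (gcut G U Uᶜ : ℝ) ≤ 47 * c * min (gvol G U : ℝ) (gvol G Uᶜ : ℝ) := by
    rcases min_cases (gvol G U : ℝ) (gvol G Uᶜ : ℝ) with ⟨hm, _⟩ | ⟨hm, _⟩ <;> rw [hm] <;>
      nlinarith
  refine ⟨h2, fun _ _ => ?_⟩
  rcases eq_or_lt_of_le (le_min ha hb) with hm0 | hm0
  · rw [← hm0, div_zero]; positivity
  · rw [div_le_iff₀ hm0]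
    calc (gcut G U Uᶜ : ℝ) ≤ 47 * c * min (gvol G U : ℝ) (gvol G Uᶜ : ℝ) := h2
      _ = 47 * c * min (gvol G U : ℝ) (gvol G Uᶜ : ℝ) := rfl
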